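/- Approximate-to-pure conversion for local randomizers: let X and Y be countable types and let R : X → PMF(Y) satisfy R(x) ≈_{ε,δ} R(x') for all x, x' ∈ X (i.e., R is an (ε,δ)-differentially private local randomizer). Then there exists a randomized algorithm R̃ : X → PMF(Y) such that R̃(x) ≈_{2ε} R̃(x') for all x, x' ∈ X (pure 2ε-differential privacy) and SD(R(x), R̃(x)) ≤ δ for every x ∈ X. -/

import Mathlib

open scoped ENNReal

/-- The probability that a PMF assigns to an event. -/
noncomputable def pmfProb {α : Type*} (P : PMF α) (E : Set α) : ℝ :=
  (P.toOuterMeasure E).toReal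

/-- `(ε,δ)`-indistinguishability of two PMFs. -/
def ApproxDP {α : Type*} (ε δ : ℝ) (P Q : PMF α) : Prop :=
  ∀ E : Set α,
    pmfProb P E ≤ Real.exp ε * pmfProb Q E + δ ∧
    pmfProb Q E ≤ Real.exp ε * pmfProb P E + δ

/-- Statistical (total variation) distance between two PMFs: the supremum over
events of the difference of the probabilities. -/
noncomputable def statDist {α : Type*} (P Q : PMF α) : ℝ :=
  ⨆ E : Set α, |pmfProb P E - pmfProb Q E|

/-- Helper constructor for `PMF` (the anonymous constructor does not coerce well). -/
noncomputable def myMk {α : Type*} (g : α → ℝ≥0∞) (hg : HasSum g 1) : PMF α := ⟨g, hg⟩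

/-- General-index version of `ENNReal.tsum_sub`. -/
lemma my_tsum_sub {Y : Type*} {f g : Y → ℝ≥0∞} (hg : ∑' y, g y ≠ ⊤)
    (hle : ∀ y, g y ≤ f y) : ∑' y, (f y - g y) = (∑' y, f y) - ∑' y, g y := by
  have h1 : ∑' y, f y = (∑' y, g y) + ∑' y, (f y - g y) := by
    rw [← ENNReal.tsum_add]
    exact tsum_congr fun y => (add_tsub_cancel_of_le (hle y)).symm
  rw [h1, ENNReal.add_sub_cancel_left hg]

/-- If two nonnegative functions both have total mass one, the total positive
part of their difference is symmetric. -/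
lemma my_tsum_tsub_comm {Y : Type*} {a b : Y → ℝ≥0∞}
    (ha : ∑' y, a y = 1) (hb : ∑' y, b y = 1) :
    ∑' y, (a y - b y) = ∑' y, (b y - a y) := by
  have key : ∀ (u v : Y → ℝ≥0∞), ∑' y, (u y ⊓ v y) + ∑' y, (u y - v y) = ∑' y, u y := by
    intro u v
    rw [← ENNReal.tsum_add]
    refine tsum_congr fun y => ?_
    rcases le_total (v y) (u y) with h | h
    · rw [inf_eq_right.mpr h, add_comm, tsub_add_cancel_of_le h]
    · rw [inf_eq_left.mpr h, tsub_eq_zero_of_le h, add_zero]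
  have h1 := key a b
  have h2 := key b a
  have hinf : ∑' y, (b y ⊓ a y) = ∑' y, (a y ⊓ b y) :=
    tsum_congr fun y => by rw [inf_comm]
  have hfin : ∑' y, (a y ⊓ b y) ≠ ⊤ :=
    ne_top_of_le_ne_top ENNReal.one_ne_top
      (le_of_le_of_eq (ENNReal.tsum_le_tsum fun y => inf_le_left) ha)
  rw [ha] at h1
  rw [hb, hinf] at h2
  exact (ENNReal.add_right_inj hfin).mp (h1.trans h2.symm)

/-- Every `(ε,δ)`-differentially private local randomizer is within statistical
distance `δ` (pointwise) of a pure `2ε`-differentially private local randomizer. -/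
theorem approx_to_pure {X Y : Type*} [Countable X] [Countable Y]
    (ε δ : ℝ) (hε : 0 ≤ ε) (hδ0 : 0 ≤ δ) (hδ1 : δ ≤ 1)
    (R : X → PMF Y)
    (hR : ∀ x x' : X, ApproxDP ε δ (R x) (R x')) :
    ∃ Rt : X → PMF Y,
      (∀ x x' : X, ApproxDP (2 * ε) 0 (Rt x) (Rt x')) ∧
      ∀ x : X, statDist (R x) (Rt x) ≤ δ := by
  rcases isEmpty_or_nonempty X with hX | hX
  · exact ⟨fun x => (IsEmpty.false x).elim, fun x => (IsEmpty.false x).elim,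
      fun x => (IsEmpty.false x).elim⟩
  obtain ⟨x₀⟩ := hX
  set c : ℝ≥0∞ := ENNReal.ofReal (Real.exp ε) with hc_def
  set d : ℝ≥0∞ := ENNReal.ofReal δ with hd_def
  set p : PMF Y := R x₀ with hp_def
  have hc1 : 1 ≤ c := by
    rw [hc_def, ← ENNReal.ofReal_one]
    exact ENNReal.ofReal_le_ofReal (Real.one_le_exp hε)
  have hc0 : c ≠ 0 := (lt_of_lt_of_le zero_lt_one hc1).ne'
  have hcT : c ≠ ⊤ := ENNReal.ofReal_ne_top
  have hcinv1 : c⁻¹ ≤ 1 := ENNReal.inv_le_one.mpr hc1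
  have hprob : ∀ (q : PMF Y) (E : Set Y), pmfProb q E = (∑' y, E.indicator q y).toReal := by
    intro q E
    rw [pmfProb, PMF.toOuterMeasure_apply]
  have hfinT : ∀ (q : PMF Y) (E : Set Y), ∑' y, E.indicator (⇑q) y ≠ ⊤ := by
    intro q E
    refine ne_top_of_le_ne_top ENNReal.one_ne_top ?_
    exact le_trans (ENNReal.tsum_le_tsum fun y => Set.indicator_le_self E (⇑q) y) q.tsum_coe.le
  -- ENNReal version of the ApproxDP hypothesis
  have hEnn : ∀ (q r : PMF Y) (E : Set Y),
      pmfProb q E ≤ Real.exp ε * pmfProb r E + δ →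
      ∑' y, E.indicator (⇑q) y ≤ c * ∑' y, E.indicator (⇑r) y + d := by
    intro q r E h
    rw [hprob, hprob] at h
    calc ∑' y, E.indicator (⇑q) y
        = ENNReal.ofReal ((∑' y, E.indicator (⇑q) y).toReal) :=
          (ENNReal.ofReal_toReal (hfinT q E)).symm
      _ ≤ ENNReal.ofReal (Real.exp ε * (∑' y, E.indicator (⇑r) y).toReal + δ) :=
          ENNReal.ofReal_le_ofReal h
      _ = c * ∑' y, E.indicator (⇑r) y + d := by
          rw [ENNReal.ofReal_add (by positivity) hδ0,
            ENNReal.ofReal_mul (Real.exp_nonneg ε), ENNReal.ofReal_toReal (hfinT r E)]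
  -- excess mass above the upper envelope is at most d
  have hA : ∀ x : X, ∑' y, (R x y - c * p y) ≤ d := by
    intro x
    set E : Set Y := {y | c * p y < R x y} with hE
    have hpoint : ∀ y, R x y - c * p y = E.indicator (⇑(R x)) y - c * E.indicator (⇑p) y := by
      intro y
      by_cases hy : y ∈ E
      · rw [Set.indicator_of_mem hy, Set.indicator_of_mem hy]
      · rw [Set.indicator_of_notMem hy, Set.indicator_of_notMem hy, mul_zero,
          tsub_eq_zero_of_le (not_lt.mp hy)]
        simp
    have hfinE : ∑' y, c * E.indicator (⇑p) y ≠ ⊤ := by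
      rw [ENNReal.tsum_mul_left]
      exact ENNReal.mul_ne_top hcT (hfinT p E)
    have hleE : ∀ y, c * E.indicator (⇑p) y ≤ E.indicator (⇑(R x)) y := by
      intro y
      by_cases hy : y ∈ E
      · rw [Set.indicator_of_mem hy, Set.indicator_of_mem hy]
        exact le_of_lt hy
      · simp [Set.indicator_of_notMem hy]
    calc ∑' y, (R x y - c * p y)
        = ∑' y, (E.indicator (⇑(R x)) y - c * E.indicator (⇑p) y) := tsum_congr hpoint
      _ = (∑' y, E.indicator (⇑(R x)) y) - ∑' y, c * E.indicator (⇑p) y :=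
          my_tsum_sub hfinE hleE
      _ ≤ d := by
          refine tsub_le_iff_right.mpr ?_
          rw [ENNReal.tsum_mul_left, add_comm]
          exact hEnn (R x) p E (hR x x₀ E).1
  -- deficit mass below the lower envelope is at most d
  have hB : ∀ x : X, ∑' y, (c⁻¹ * p y - R x y) ≤ d := by
    intro x
    set E : Set Y := {y | R x y < c⁻¹ * p y} with hE
    have hpoint : ∀ y, c⁻¹ * p y - R x y = c⁻¹ * E.indicator (⇑p) y - E.indicator (⇑(R x)) y := by
      intro y
      by_cases hy : y ∈ E
      · rw [Set.indicator_of_mem hy, Set.indicator_of_mem hy]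
      · rw [Set.indicator_of_notMem hy, Set.indicator_of_notMem hy, mul_zero,
          tsub_eq_zero_of_le (not_lt.mp hy)]
        simp
    have hfinE : ∑' y, E.indicator (⇑(R x)) y ≠ ⊤ := hfinT (R x) E
    have hleE : ∀ y, E.indicator (⇑(R x)) y ≤ c⁻¹ * E.indicator (⇑p) y := by
      intro y
      by_cases hy : y ∈ E
      · rw [Set.indicator_of_mem hy, Set.indicator_of_mem hy]
        exact le_of_lt hy
      · simp [Set.indicator_of_notMem hy]
    calc ∑' y, (c⁻¹ * p y - R x y)
        = ∑' y, (c⁻¹ * E.indicator (⇑p) y - E.indicator (⇑(R x)) y) := tsum_congr hpoint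
      _ = (∑' y, c⁻¹ * E.indicator (⇑p) y) - ∑' y, E.indicator (⇑(R x)) y :=
          my_tsum_sub hfinE hleE
      _ ≤ d := by
          refine tsub_le_iff_right.mpr ?_
          rw [ENNReal.tsum_mul_left]
          calc c⁻¹ * ∑' y, E.indicator (⇑p) y
              ≤ c⁻¹ * (c * ∑' y, E.indicator (⇑(R x)) y + d) :=
                mul_le_mul_right (hEnn p (R x) E (hR x₀ x E).1) _
            _ = (c⁻¹ * c) * ∑' y, E.indicator (⇑(R x)) y + c⁻¹ * d := by ring
            _ = ∑' y, E.indicator (⇑(R x)) y + c⁻¹ * d := by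
                rw [ENNReal.inv_mul_cancel hc0 hcT, one_mul]
            _ ≤ d + ∑' y, E.indicator (⇑(R x)) y := by
                rw [add_comm]
                exact add_le_add_left (mul_le_of_le_one_left (zero_le) hcinv1) _
  -- main construction, one input at a time
  have main : ∀ x : X, ∃ q : Y → ℝ≥0∞, (∑' y, q y = 1) ∧ (∀ y, c⁻¹ * p y ≤ q y) ∧
      (∀ y, q y ≤ c * p y) ∧ (∑' y, (R x y - q y) ≤ d) ∧ (∑' y, (q y - R x y) ≤ d) := by
    intro x
    set f : Y → ℝ≥0∞ := fun y => max (c⁻¹ * p y) (min (R x y) (c * p y)) with hf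
    have hf_lb : ∀ y, c⁻¹ * p y ≤ f y := fun y => le_max_left _ _
    have hf_ub : ∀ y, f y ≤ c * p y := by
      intro y
      refine max_le ?_ (min_le_right _ _)
      exact mul_le_mul_left (le_trans hcinv1 hc1) _
    set S : ℝ≥0∞ := ∑' y, f y with hS
    have hSum_cp : ∑' y, c * p y = c := by rw [ENNReal.tsum_mul_left, p.tsum_coe, mul_one]
    have hSum_cip : ∑' y, c⁻¹ * p y = c⁻¹ := by rw [ENNReal.tsum_mul_left, p.tsum_coe, mul_one]
    have hSc : S ≤ c := le_trans (ENNReal.tsum_le_tsum hf_ub) hSum_cp.le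
    have hST : S ≠ ⊤ := ne_top_of_le_ne_top hcT hSc
    have hciS : c⁻¹ ≤ S := le_trans hSum_cip.ge (ENNReal.tsum_le_tsum hf_lb)
    have hcipT : ∑' y, c⁻¹ * p y ≠ ⊤ := by
      rw [hSum_cip]
      exact ENNReal.inv_ne_top.mpr hc0
    have hcpT : ∀ y, c * p y ≠ ⊤ :=
      fun y => ENNReal.mul_ne_top hcT (ne_top_of_le_ne_top ENNReal.one_ne_top (p.coe_le_one y))
    have hfT : ∀ y, f y ≠ ⊤ := fun y => ne_top_of_le_ne_top (hcpT y) (hf_ub y)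
    have hRf : ∀ y, R x y - f y ≤ R x y - c * p y := by
      intro y
      rcases le_total (R x y) (c * p y) with h | h
      · have hle : R x y ≤ f y := le_max_of_le_right (le_min le_rfl h)
        rw [tsub_eq_zero_of_le hle]
        exact zero_le
      · have hle : c * p y ≤ f y := by
          calc c * p y = min (R x y) (c * p y) := (min_eq_right h).symm
            _ ≤ f y := le_max_right _ _
        exact tsub_le_tsub_left hle _
    have hfR : ∀ y, f y - R x y ≤ c⁻¹ * p y - R x y := by
      intro y
      rcases le_total (c⁻¹ * p y) (min (R x y) (c * p y)) with h | h
      · have hle : f y ≤ R x y := by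
          have heq : f y = min (R x y) (c * p y) := max_eq_right h
          rw [heq]
          exact min_le_left _ _
        rw [tsub_eq_zero_of_le hle]
        exact zero_le
      · have heq : f y = c⁻¹ * p y := max_eq_left h
        rw [heq]
    rcases le_or_gt S 1 with hS1 | hS1
    · -- add mass towards the upper envelope
      set t : ℝ≥0∞ := (1 - S) / (c - S) with ht
      have ht1 : t ≤ 1 :=
        le_trans (ENNReal.div_le_div_right (tsub_le_tsub_right hc1 S) _) ENNReal.div_self_le_one
      refine ⟨fun y => f y + t * (c * p y - f y), ?_, ?_, ?_, ?_, ?_⟩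
      · have hts : t * (c - S) = 1 - S := by
          by_cases hcs : c - S = 0
          · have hSc' : c ≤ S := tsub_eq_zero_iff_le.mp hcs
            have hSeq : S = 1 := le_antisymm hS1 (le_trans hc1 hSc')
            rw [hcs, mul_zero, hSeq, tsub_self]
          · exact ENNReal.div_mul_cancel hcs (ENNReal.sub_ne_top hcT)
        rw [ENNReal.tsum_add, ENNReal.tsum_mul_left, my_tsum_sub hST hf_ub, hSum_cp, ← hS,
          hts, add_tsub_cancel_of_le hS1]
      · exact fun y => le_trans (hf_lb y) le_self_add
      · intro y
        calc f y + t * (c * p y - f y) ≤ f y + (c * p y - f y) :=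
              add_le_add_right (mul_le_of_le_one_left (zero_le) ht1) _
          _ = c * p y := add_tsub_cancel_of_le (hf_ub y)
      · refine le_trans (ENNReal.tsum_le_tsum fun y => ?_) (hA x)
        exact le_trans (tsub_le_tsub_left le_self_add _) (hRf y)
      · have hsum1 : ∑' y, (f y + t * (c * p y - f y)) = 1 := by
          have hts : t * (c - S) = 1 - S := by
            by_cases hcs : c - S = 0
            · have hSc' : c ≤ S := tsub_eq_zero_iff_le.mp hcs
              have hSeq : S = 1 := le_antisymm hS1 (le_trans hc1 hSc')
              rw [hcs, mul_zero, hSeq, tsub_self]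
            · exact ENNReal.div_mul_cancel hcs (ENNReal.sub_ne_top hcT)
          rw [ENNReal.tsum_add, ENNReal.tsum_mul_left, my_tsum_sub hST hf_ub, hSum_cp, ← hS,
            hts, add_tsub_cancel_of_le hS1]
        rw [my_tsum_tsub_comm hsum1 (R x).tsum_coe]
        refine le_trans (ENNReal.tsum_le_tsum fun y => ?_) (hA x)
        exact le_trans (tsub_le_tsub_left le_self_add _) (hRf y)
    · -- remove mass towards the lower envelope
      set t : ℝ≥0∞ := (S - 1) / (S - c⁻¹) with ht
      have hden0 : S - c⁻¹ ≠ 0 := (tsub_pos_iff_lt.mpr (lt_of_le_of_lt hcinv1 hS1)).ne'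
      have hdenT : S - c⁻¹ ≠ ⊤ := ENNReal.sub_ne_top hST
      have ht1 : t ≤ 1 :=
        le_trans (ENNReal.div_le_div_right (tsub_le_tsub_left hcinv1 S) _) ENNReal.div_self_le_one
      have hsub_le : ∀ y, t * (f y - c⁻¹ * p y) ≤ f y :=
        fun y => le_trans (mul_le_of_le_one_left (zero_le) ht1) tsub_le_self
      have hsumsub : ∑' y, t * (f y - c⁻¹ * p y) = t * (S - c⁻¹) := by
        rw [ENNReal.tsum_mul_left, my_tsum_sub hcipT hf_lb, hSum_cip, ← hS]
      have hsum1 : ∑' y, (f y - t * (f y - c⁻¹ * p y)) = 1 := by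
        have hfinsub : ∑' y, t * (f y - c⁻¹ * p y) ≠ ⊤ := by
          rw [hsumsub]
          exact ENNReal.mul_ne_top (ne_top_of_le_ne_top ENNReal.one_ne_top ht1) hdenT
        rw [my_tsum_sub hfinsub hsub_le, hsumsub, ENNReal.div_mul_cancel hden0 hdenT, ← hS,
          ENNReal.sub_sub_cancel hST hS1.le]
      refine ⟨fun y => f y - t * (f y - c⁻¹ * p y), hsum1, ?_, ?_, ?_, ?_⟩
      · intro y
        have h1 : c⁻¹ * p y = f y - (f y - c⁻¹ * p y) :=
          (ENNReal.sub_sub_cancel (hfT y) (hf_lb y)).symm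
        rw [h1]
        exact tsub_le_tsub_left (mul_le_of_le_one_left (zero_le) ht1) _
      · exact fun y => le_trans tsub_le_self (hf_ub y)
      · rw [my_tsum_tsub_comm (R x).tsum_coe hsum1]
        refine le_trans (ENNReal.tsum_le_tsum fun y => ?_) (hB x)
        exact le_trans (tsub_le_tsub_right tsub_le_self _) (hfR y)
      · refine le_trans (ENNReal.tsum_le_tsum fun y => ?_) (hB x)
        exact le_trans (tsub_le_tsub_right tsub_le_self _) (hfR y)
  choose q hq1 hq2 hq3 hq4 hq5 using main
  have hhs : ∀ x, HasSum (q x) 1 := fun x => (hq1 x) ▸ ENNReal.summable.hasSum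
  refine ⟨fun x => myMk (q x) (hhs x), ?_, ?_⟩
  · -- pure 2ε differential privacy
    have hq_le : ∀ x x' y, q x y ≤ c ^ 2 * q x' y := by
      intro x x' y
      have hcc : c ^ 2 * c⁻¹ = c := by
        rw [pow_two, mul_assoc, ENNReal.mul_inv_cancel hc0 hcT, mul_one]
      calc q x y ≤ c * p y := hq3 x y
        _ = c ^ 2 * (c⁻¹ * p y) := by rw [← mul_assoc, hcc]
        _ ≤ c ^ 2 * q x' y := mul_le_mul_right (hq2 x' y) _
    intro x x' E
    have hgen : ∀ x x' : X, pmfProb (myMk (q x) (hhs x)) E ≤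
        Real.exp (2 * ε) * pmfProb (myMk (q x') (hhs x')) E + 0 := by
      intro x x'
      have hcoe : ∀ x : X, ⇑(myMk (q x) (hhs x)) = q x := fun _ => rfl
      have h1 : ∑' y, E.indicator (q x) y ≤ c ^ 2 * ∑' y, E.indicator (q x') y := by
        rw [← ENNReal.tsum_mul_left]
        refine ENNReal.tsum_le_tsum fun y => ?_
        by_cases hy : y ∈ E
        · rw [Set.indicator_of_mem hy, Set.indicator_of_mem hy]
          exact hq_le x x' y
        · simp [Set.indicator_of_notMem hy]
      have hc2T : c ^ 2 ≠ ⊤ := by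
        rw [pow_two]
        exact ENNReal.mul_ne_top hcT hcT
      have hexp : (c ^ 2).toReal = Real.exp (2 * ε) := by
        rw [hc_def, ← ENNReal.ofReal_pow (Real.exp_nonneg ε),
          ENNReal.toReal_ofReal (by positivity), two_mul, Real.exp_add, sq]
      have hfinq : ∑' y, E.indicator (q x') y ≠ ⊤ := by
        rw [← hcoe x']
        exact hfinT _ E
      rw [add_zero, hprob, hprob, hcoe, hcoe]
      calc (∑' y, E.indicator (q x) y).toReal
          ≤ (c ^ 2 * ∑' y, E.indicator (q x') y).toReal :=
            ENNReal.toReal_mono (ENNReal.mul_ne_top hc2T hfinq) h1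
        _ = Real.exp (2 * ε) * (∑' y, E.indicator (q x') y).toReal := by
            rw [ENNReal.toReal_mul, hexp]
    exact ⟨hgen x x', hgen x' x⟩
  · -- statistical distance bound
    intro x
    have hclose : ∀ (P Q : PMF Y), (∑' y, ((P : Y → ℝ≥0∞) y - Q y)) ≤ d →
        ∀ E : Set Y, pmfProb P E ≤ pmfProb Q E + δ := by
      intro P Q h E
      have h1 : ∑' y, E.indicator (⇑P) y ≤ ∑' y, E.indicator (⇑Q) y + d := by
        calc ∑' y, E.indicator (⇑P) y ≤ ∑' y, (E.indicator (⇑Q) y + (P y - Q y)) := by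
              refine ENNReal.tsum_le_tsum fun y => ?_
              by_cases hy : y ∈ E
              · rw [Set.indicator_of_mem hy, Set.indicator_of_mem hy]
                exact le_add_tsub
              · rw [Set.indicator_of_notMem hy]
                exact zero_le
          _ = ∑' y, E.indicator (⇑Q) y + ∑' y, (P y - Q y) := ENNReal.tsum_add
          _ ≤ ∑' y, E.indicator (⇑Q) y + d := add_le_add_right h _
      rw [hprob, hprob]
      have h2 := ENNReal.toReal_mono
        (ENNReal.add_ne_top.mpr ⟨hfinT Q E, ENNReal.ofReal_ne_top⟩) h1
      rwa [ENNReal.toReal_add (hfinT Q E) ENNReal.ofReal_ne_top,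
        ENNReal.toReal_ofReal hδ0] at h2
    refine ciSup_le fun E => ?_
    rw [abs_sub_le_iff]
    have hcl1 := hclose (R x) (myMk (q x) (hhs x)) (hq4 x) E
    have hcl2 := hclose (myMk (q x) (hhs x)) (R x) (hq5 x) E
    constructor
    · linarith
    · linarith
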